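/- Let G^N be a symmetric probability measure on E^N and 1 ≤ j ≤ 1 + N/2. Let Ĝ^N_j be the j-th moment measure of the empirical law, i.e. the measure defined by ⟨Ĝ^N_j, φ⟩ = ∫_{E^N} ⟨(μ^N_X)^{⊗j}, φ⟩ G^N(dX) where μ^N_X = N^{-1} Σ δ_{x_i}. Then the total variation distance satisfies ‖G^N_j − Ĝ^N_j‖_{TV} ≤ 2 j(j−1)/N. -/

import Mathlib

open MeasureTheory ENNReal

noncomputable section

/-- Empirical measure `μ^N_X = (1/N) Σᵢ δ_{xᵢ}`. -/
def empMeas {α : Type*} [MeasurableSpace α] {N : ℕ} (X : Fin N → α) : Measure α :=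
  (N : ℝ≥0∞)⁻¹ • ∑ i, Measure.dirac (X i)

/-- Marginal on the first `j` coordinates. -/
def marg (d N j : ℕ) (h : j ≤ N) (F : Measure (Fin N → EuclideanSpace ℝ (Fin d))) :
    Measure (Fin j → EuclideanSpace ℝ (Fin d)) :=
  F.map (fun X => fun i : Fin j => X (Fin.castLE h i))

/-- Total variation distance (with the convention `‖μ−ν‖_TV = sup_{‖φ‖∞≤1} ⟨μ−ν,φ⟩`,
which for measures of equal mass equals `2 sup_s |μ(s)−ν(s)|`). -/
def tvDist {Ω : Type*} [MeasurableSpace Ω] (μ ν : Measure Ω) : ℝ≥0∞ :=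
  2 * ⨆ (s : Set Ω) (_ : MeasurableSet s), max (μ s - ν s) (ν s - μ s)

open Function in
lemma nat_key (N : ℕ) : ∀ j : ℕ, N ^ j ≤ N.descFactorial j + j * (j-1) * N ^ (j-1) := by
  intro j
  induction j with
  | zero => simp
  | succ m ih =>
    match m, ih with
    | 0, _ => simp [Nat.descFactorial_succ]
    | Nat.succ m, ih =>
      simp only [Nat.succ_sub_one, Nat.succ_eq_add_one, Nat.add_sub_cancel] at ih ⊢
      have h1 : N * N.descFactorial (m+1) ≤ N.descFactorial (m+2) + (m+1) * N.descFactorial (m+1) := by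
        rw [Nat.descFactorial_succ (k := m+1)]
        calc N * N.descFactorial (m+1) ≤ ((N - (m+1)) + (m+1)) * N.descFactorial (m+1) :=
              Nat.mul_le_mul_right _ le_tsub_add
          _ = (N - (m+1)) * N.descFactorial (m+1) + (m+1) * N.descFactorial (m+1) := by ring
      have h2 : N.descFactorial (m+1) ≤ N ^ (m+1) := Nat.descFactorial_le_pow _ _
      calc N ^ (m+1+1) = N * N ^ (m+1) := by ring
        _ ≤ N * (N.descFactorial (m+1) + (m+1) * m * N ^ m) := Nat.mul_le_mul_left N ih
        _ = N * N.descFactorial (m+1) + (m+1) * m * (N * N ^ m) := by ring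
        _ ≤ (N.descFactorial (m+2) + (m+1) * N.descFactorial (m+1)) + (m+1) * m * N ^ (m+1) := by
            rw [pow_succ, mul_comm (N ^ m) N]; exact Nat.add_le_add_right h1 _
        _ ≤ (N.descFactorial (m+2) + (m+1) * N ^ (m+1)) + (m+1) * m * N ^ (m+1) := by
            exact Nat.add_le_add_right (Nat.add_le_add_left (Nat.mul_le_mul_left _ h2) _) _
        _ = N.descFactorial (m+2) + (m+1) * (m+1) * N ^ (m+1) := by ring
        _ ≤ N.descFactorial (m+1+1) + (m+1+1) * (m+1) * N ^ (m+1) := by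
            have : (m+1) * (m+1) ≤ (m+1+1) * (m+1) := Nat.mul_le_mul_right _ (by omega)
            exact Nat.add_le_add_left (Nat.mul_le_mul_right _ this) _


open Function in
lemma exists_perm {j N : ℕ} (hjN : j ≤ N) (f : Fin j → Fin N) (hf : Function.Injective f) :
    ∃ σ : Equiv.Perm (Fin N), ∀ k, σ (Fin.castLE hjN k) = f k := by
  classical
  set g : Fin j → Fin N := Fin.castLE hjN with hg
  have hginj : Function.Injective g := Fin.castLE_injective hjN
  have hcard : Fintype.card ↥(Set.range g)ᶜ = Fintype.card ↥(Set.range f)ᶜ := by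
    rw [Fintype.card_compl_set, Fintype.card_compl_set,
      Set.card_range_of_injective hginj, Set.card_range_of_injective hf]
  refine ⟨((Equiv.Set.sumCompl (Set.range g)).symm.trans
    (((Equiv.ofInjective g hginj).symm.trans (Equiv.ofInjective f hf)).sumCongr
      (Fintype.equivOfCardEq hcard))).trans (Equiv.Set.sumCompl (Set.range f)), fun k => ?_⟩
  have hmem : g k ∈ Set.range g := ⟨k, rfl⟩
  rw [Equiv.trans_apply, Equiv.trans_apply, Equiv.Set.sumCompl_symm_apply_of_mem hmem]
  simp only [Equiv.sumCongr_apply, Sum.map_inl, Function.comp_apply]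
  rw [show (⟨g k, hmem⟩ : ↥(Set.range g)) = Equiv.ofInjective g hginj k from rfl]
  simp [Equiv.trans_apply, Equiv.symm_apply_apply, Equiv.Set.sumCompl_apply_inl,
    Equiv.ofInjective_apply]

lemma empMeas_apply {α : Type*} [MeasurableSpace α] {N : ℕ} (X : Fin N → α) {s : Set α}
    (hs : MeasurableSet s) :
    empMeas X s = (N : ℝ≥0∞)⁻¹ * ∑ i, s.indicator 1 (X i) := by
  simp [empMeas, Measure.smul_apply, Measure.finset_sum_apply, Measure.dirac_apply' _ hs]


instance empMeas_finite {α : Type*} [MeasurableSpace α] {N : ℕ} (X : Fin N → α) :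
    IsFiniteMeasure (empMeas X) := by
  constructor
  rw [empMeas_apply X MeasurableSet.univ]
  simp only [Set.indicator_univ, Pi.one_apply, Finset.sum_const, Finset.card_univ,
    Fintype.card_fin, nsmul_eq_mul, mul_one]
  rcases eq_or_ne (N : ℝ≥0∞) 0 with h | h
  · simp [h]
  · rw [ENNReal.inv_mul_cancel h (ENNReal.natCast_ne_top N)]
    exact ENNReal.one_lt_top


lemma pi_empMeas {α : Type*} [MeasurableSpace α] {N j : ℕ} (X : Fin N → α) :
    (Measure.pi fun _ : Fin j => empMeas X) =
      ((N : ℝ≥0∞)⁻¹) ^ j • ∑ f : Fin j → Fin N, Measure.dirac (X ∘ f) := by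
  refine (Measure.pi_eq (μ := fun _ : Fin j => empMeas X) fun s hs => ?_)
  have hps : MeasurableSet (Set.univ.pi s) := MeasurableSet.univ_pi hs
  rw [Measure.smul_apply, Measure.finset_sum_apply, smul_eq_mul]
  have hterm : ∀ f : Fin j → Fin N,
      Measure.dirac (X ∘ f) (Set.univ.pi s) = ∏ k, (s k).indicator 1 (X (f k)) := by
    intro f
    rw [Measure.dirac_apply' _ hps]
    by_cases h : (X ∘ f) ∈ Set.univ.pi s
    · rw [Set.indicator_of_mem h]
      refine (Finset.prod_eq_one fun k _ => ?_).symm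
      exact Set.indicator_of_mem (h k (Set.mem_univ k)) 1
    · rw [Set.indicator_of_notMem h]
      rw [Set.mem_univ_pi] at h
      push_neg at h
      obtain ⟨k, hk⟩ := h
      exact ((Finset.prod_eq_zero (Finset.mem_univ k) (Set.indicator_of_notMem hk 1))).symm
  simp_rw [hterm]
  have hrhs : ∏ x : Fin j, empMeas X (s x)
      = (↑N)⁻¹ ^ j * ∑ f : Fin j → Fin N, ∏ k, (s k).indicator 1 (X (f k)) := by
    simp_rw [empMeas_apply X (hs _)]
    rw [Finset.prod_mul_distrib, Finset.prod_const, Finset.prod_univ_sum]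
    simp [Fintype.piFinset_univ, Finset.card_univ]
  rw [hrhs]

/-- For a symmetric probability measure `G^N` on `E^N` and `1 ≤ j ≤ 1 + N/2`,
the `j`-th marginal `G^N_j` and the `j`-th moment measure `Ĝ^N_j` of the empirical law
satisfy `‖G^N_j − Ĝ^N_j‖_TV ≤ 2 j(j−1)/N`. -/
theorem stmt4 (d N j : ℕ) (hj : 1 ≤ j) (hjN : j ≤ N) (hjN2 : (j : ℝ) ≤ 1 + (N : ℝ) / 2)
    (G : Measure (Fin N → EuclideanSpace ℝ (Fin d))) [IsProbabilityMeasure G]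
    (hsym : ∀ σ : Equiv.Perm (Fin N), G.map (fun X => X ∘ σ) = G) :
    tvDist (marg d N j hjN G)
        (G.bind fun X => Measure.pi fun _ : Fin j => empMeas X) ≤
      ((2 * j * (j - 1) : ℕ) : ℝ≥0∞) / (N : ℝ≥0∞) := by
  classical
  set E := EuclideanSpace ℝ (Fin d) with hE
  have hN0 : (N : ℝ≥0∞) ≠ 0 := Nat.cast_ne_zero.mpr (by omega)
  have hNtop : (N : ℝ≥0∞) ≠ ∞ := ENNReal.natCast_ne_top N
  have hcN : (N : ℝ≥0∞)⁻¹ * N = 1 := ENNReal.inv_mul_cancel hN0 hNtop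
  have hpowj : ((N : ℝ≥0∞)⁻¹) ^ j * (N : ℝ≥0∞) ^ j = 1 := by
    rw [← mul_pow, hcN, one_pow]
  have hpow1 : ((N : ℝ≥0∞)⁻¹) ^ j * (N : ℝ≥0∞) ^ (j - 1) = (N : ℝ≥0∞)⁻¹ := by
    obtain ⟨m, rfl⟩ : ∃ m, j = m + 1 := ⟨j - 1, by omega⟩
    rw [Nat.add_sub_cancel, pow_succ]
    calc ((N : ℝ≥0∞)⁻¹) ^ m * (N : ℝ≥0∞)⁻¹ * (N : ℝ≥0∞) ^ m
        = ((N : ℝ≥0∞)⁻¹ * N) ^ m * (N : ℝ≥0∞)⁻¹ := by rw [mul_pow]; ring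
      _ = (N : ℝ≥0∞)⁻¹ := by rw [hcN, one_pow, one_mul]
  have hmf : ∀ f : Fin j → Fin N, Measurable (fun X : Fin N → E => X ∘ f) :=
    fun f => measurable_pi_lambda _ fun k => measurable_pi_apply _
  -- rewrite the bind kernel
  have hbind : (G.bind fun X => Measure.pi fun _ : Fin j => empMeas X)
      = G.bind (fun X => ((N : ℝ≥0∞)⁻¹) ^ j • ∑ f : Fin j → Fin N, Measure.dirac (X ∘ f)) := by
    congr 1
    exact funext fun X => pi_empMeas X
  have hker : Measurable (fun X : Fin N → E =>
      (((N : ℝ≥0∞)⁻¹) ^ j • ∑ f : Fin j → Fin N, Measure.dirac (X ∘ f) : Measure (Fin j → E))) := by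
    apply Measure.measurable_of_measurable_coe
    intro t ht
    simp only [Measure.smul_apply, Measure.finset_sum_apply, smul_eq_mul,
      Measure.dirac_apply' _ ht]
    exact (Finset.measurable_sum _ fun f _ =>
      (measurable_one.indicator ht).comp (hmf f)).const_mul _
  -- marginal as a map
  have hmarg : marg d N j hjN G = G.map (fun X => X ∘ Fin.castLE hjN) := rfl
  -- symmetry
  have hsymf : ∀ f : Fin j → Fin N, Function.Injective f →
      G.map (fun X : Fin N → E => X ∘ f) = G.map (fun X : Fin N → E => X ∘ Fin.castLE hjN) := by
    intro f hf
    obtain ⟨σ, hσ⟩ := exists_perm hjN f hf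
    have h1 : (fun X : Fin N → E => X ∘ f)
        = (fun Y : Fin N → E => Y ∘ Fin.castLE hjN) ∘ (fun X => X ∘ σ) := by
      funext X
      funext k
      simp only [Function.comp_apply, Function.comp, hσ k]
    rw [h1, ← Measure.map_map (hmf (Fin.castLE hjN))
      (measurable_pi_lambda _ fun k => measurable_pi_apply _), hsym σ]
  -- counting
  set I : Finset (Fin j → Fin N) := Finset.univ.filter (fun f => Function.Injective f) with hIdef
  set Ic : Finset (Fin j → Fin N) := Finset.univ.filter (fun f => ¬ Function.Injective f) with hIcdef
  have hcards : I.card + Ic.card = N ^ j := by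
    rw [hIdef, hIcdef, Finset.card_filter_add_card_filter_not, Finset.card_univ]
    simp
  have hcardI : I.card = N.descFactorial j := by
    have h1 : I.card = Fintype.card {f : Fin j → Fin N // Function.Injective f} :=
      (Fintype.card_subtype _).symm
    rw [h1, Fintype.card_congr (Equiv.subtypeInjectiveEquivEmbedding (Fin j) (Fin N)),
      Fintype.card_embedding_eq, Fintype.card_fin, Fintype.card_fin]
  have hIcbound : (Ic.card : ℝ≥0∞) ≤ ((j * (j - 1) * N ^ (j - 1) : ℕ) : ℝ≥0∞) := by
    refine Nat.cast_le.mpr ?_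
    have := nat_key N j
    omega
  -- the key bound constant
  set K : ℝ≥0∞ := ((N : ℝ≥0∞)⁻¹) ^ j * Ic.card with hKdef
  have hK : K ≤ ((j * (j - 1) : ℕ) : ℝ≥0∞) / (N : ℝ≥0∞) := by
    calc K ≤ ((N : ℝ≥0∞)⁻¹) ^ j * ((j * (j - 1) * N ^ (j - 1) : ℕ) : ℝ≥0∞) :=
          mul_le_mul_right hIcbound _
      _ = ((j * (j - 1) : ℕ) : ℝ≥0∞) * (((N : ℝ≥0∞)⁻¹) ^ j * (N : ℝ≥0∞) ^ (j - 1)) := by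
          rw [Nat.cast_mul, Nat.cast_pow]; ring
      _ = ((j * (j - 1) : ℕ) : ℝ≥0∞) * (N : ℝ≥0∞)⁻¹ := by rw [hpow1]
      _ = ((j * (j - 1) : ℕ) : ℝ≥0∞) / (N : ℝ≥0∞) := by rw [div_eq_mul_inv]
  -- reduce the goal
  rw [tvDist, show ((2 * j * (j - 1) : ℕ) : ℝ≥0∞) = 2 * ((j * (j - 1) : ℕ) : ℝ≥0∞) by
    rw [mul_assoc, Nat.cast_mul, Nat.cast_ofNat], mul_div_assoc]
  refine mul_le_mul_right (iSup_le fun s => iSup_le fun hs => ?_) 2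
  -- notation for this measurable set
  set A : ℝ≥0∞ := (G.map (fun X : Fin N → E => X ∘ Fin.castLE hjN)) s with hAdef
  have hprob : ∀ f : Fin j → Fin N, (G.map (fun X : Fin N → E => X ∘ f)) s ≤ 1 := by
    intro f
    haveI : IsProbabilityMeasure (G.map (fun X : Fin N → E => X ∘ f)) :=
      Measure.isProbabilityMeasure_map (hmf f).aemeasurable
    exact prob_le_one
  have hA1 : A ≤ 1 := hprob _
  -- compute the bind measure on s
  have hν : (G.bind fun X => Measure.pi fun _ : Fin j => empMeas X) s
      = ((N : ℝ≥0∞)⁻¹) ^ j * ∑ f : Fin j → Fin N, (G.map (fun X : Fin N → E => X ∘ f)) s := by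
    rw [hbind, Measure.bind_apply hs hker.aemeasurable]
    simp only [Measure.smul_apply, Measure.finset_sum_apply, smul_eq_mul,
      Measure.dirac_apply' _ hs]
    rw [lintegral_const_mul' _ _ (ENNReal.pow_ne_top (ENNReal.inv_ne_top.mpr hN0))]
    congr 1
    have hmeasint : ∀ f : Fin j → Fin N,
        Measurable (fun a : Fin N → E => s.indicator (1 : (Fin j → E) → ℝ≥0∞) (a ∘ f)) :=
      fun f => (measurable_one.indicator hs).comp (hmf f)
    rw [lintegral_finset_sum _ fun f _ => hmeasint f]
    refine Finset.sum_congr rfl fun f _ => ?_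
    rw [Measure.map_apply (hmf f) hs, ← lintegral_indicator_one ((hmf f) hs)]
    refine lintegral_congr fun X => ?_
    simp [Set.indicator_apply, Set.mem_preimage]
  -- split the sum
  have hsplit : ∑ f : Fin j → Fin N, (G.map (fun X : Fin N → E => X ∘ f)) s
      = (I.card : ℝ≥0∞) * A + ∑ f ∈ Ic, (G.map (fun X : Fin N → E => X ∘ f)) s := by
    rw [← Finset.sum_filter_add_sum_filter_not Finset.univ (fun f => Function.Injective f)]
    congr 1
    rw [Finset.sum_congr rfl fun f hf => by
      rw [hsymf f ((Finset.mem_filter.mp hf).2)]]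
    rw [Finset.sum_const, nsmul_eq_mul]
  have hS : ∑ f ∈ Ic, (G.map (fun X : Fin N → E => X ∘ f)) s ≤ (Ic.card : ℝ≥0∞) := by
    calc ∑ f ∈ Ic, (G.map (fun X : Fin N → E => X ∘ f)) s ≤ ∑ _f ∈ Ic, 1 :=
          Finset.sum_le_sum fun f _ => hprob f
      _ = (Ic.card : ℝ≥0∞) := by rw [Finset.sum_const, nsmul_eq_mul, mul_one]
  have hNsplit : ((N : ℝ≥0∞)) ^ j = (I.card : ℝ≥0∞) + (Ic.card : ℝ≥0∞) := by
    rw [← Nat.cast_pow, ← hcards, Nat.cast_add]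
  -- two one-sided bounds
  have hle1 : marg d N j hjN G s ≤ K
      + (G.bind fun X => Measure.pi fun _ : Fin j => empMeas X) s := by
    rw [hmarg, ← hAdef, hν, hsplit]
    calc A = (((N : ℝ≥0∞)⁻¹) ^ j * (N : ℝ≥0∞) ^ j) * A := by rw [hpowj, one_mul]
      _ = ((N : ℝ≥0∞)⁻¹) ^ j * ((Ic.card : ℝ≥0∞) * A)
          + ((N : ℝ≥0∞)⁻¹) ^ j * ((I.card : ℝ≥0∞) * A) := by rw [hNsplit]; ring
      _ ≤ K + ((N : ℝ≥0∞)⁻¹) ^ j * ((I.card : ℝ≥0∞) * A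
          + ∑ f ∈ Ic, (G.map (fun X : Fin N → E => X ∘ f)) s) := by
          refine add_le_add ?_ (mul_le_mul_right le_self_add _)
          rw [hKdef]
          exact mul_le_mul_right (by simpa using mul_le_mul_right hA1 (Ic.card : ℝ≥0∞)) _
  have hle2 : (G.bind fun X => Measure.pi fun _ : Fin j => empMeas X) s
      ≤ K + marg d N j hjN G s := by
    rw [hmarg, ← hAdef, hν, hsplit, mul_add]
    rw [add_comm K A]
    refine add_le_add ?_ ?_
    · calc ((N : ℝ≥0∞)⁻¹) ^ j * ((I.card : ℝ≥0∞) * A)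
          = (((N : ℝ≥0∞)⁻¹) ^ j * (I.card : ℝ≥0∞)) * A := by ring
        _ ≤ 1 * A := by
            refine mul_le_mul_left ?_ A
            calc ((N : ℝ≥0∞)⁻¹) ^ j * (I.card : ℝ≥0∞)
                ≤ ((N : ℝ≥0∞)⁻¹) ^ j * (N : ℝ≥0∞) ^ j := by
                  refine mul_le_mul_right ?_ _
                  rw [← Nat.cast_pow]
                  exact Nat.cast_le.mpr (by omega)
              _ = 1 := hpowj
        _ = A := one_mul A
    · exact mul_le_mul_right hS _
  refine max_le ?_ ?_ |>.trans hK
  · exact tsub_le_iff_right.mpr hle1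
  · exact tsub_le_iff_right.mpr hle2
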